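/- Let F₂ = ℤ/2 and let S = {i ∈ ℕ : i ≥ 2 and i + 1 is not a power of 2}. (Note that if i ∈ S then 2i + 1 ∈ S.) Then the quotient of the multivariate polynomial algebra F₂[y_i : i ∈ S] by the ideal generated by the elements y_i² − y_{2i+1} for all i ∈ S is isomorphic, as an F₂-algebra, to the polynomial algebra F₂[y_e : e ∈ S, e even] on the even-indexed variables, via the map sending the class of y_{2^k(e+1) − 1} to y_e^{2^k} for e even in S and k ≥ 0. In particular, if each y_i is assigned degree i + 1, the quotient is a polynomial algebra whose generators all lie in odd degrees. -/

import Mathlib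

open MvPolynomial

/-- The index set `S = {i ∈ ℕ : i ≥ 2 and i + 1 is not a power of 2}`. -/
def nonMersenneSet : Set ℕ := {i : ℕ | 2 ≤ i ∧ ¬ ∃ j : ℕ, i + 1 = 2 ^ j}

/-- The even elements of `S`. -/
def evenNonMersenneSet : Set ℕ := {e : ℕ | e ∈ nonMersenneSet ∧ Even e}

/-- The ideal of `F₂[yᵢ : i ∈ S]` generated by the elements `yᵢ² - y_{2i+1}`
(note that `2i + 1 ∈ S` whenever `i ∈ S`). -/
noncomputable def dyerLashofIdeal : Ideal (MvPolynomial nonMersenneSet (ZMod 2)) :=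
  Ideal.span {p : MvPolynomial nonMersenneSet (ZMod 2) |
    ∃ i j : nonMersenneSet, (j : ℕ) = 2 * (i : ℕ) + 1 ∧ p = X i ^ 2 - X j}

-- uniqueness of 2-adic decomposition
lemma uniq_aux {e k e' k' : ℕ} (he : Even e) (he' : Even e')
    (h : 2 ^ k * (e + 1) = 2 ^ k' * (e' + 1)) (hkk : k ≤ k') : k = k' ∧ e = e' := by
  have h2 : e + 1 = 2 ^ (k' - k) * (e' + 1) := by
    have hp : (2:ℕ) ^ k' = 2 ^ k * 2 ^ (k' - k) := by
      rw [← pow_add]; congr 1; omega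
    have := h
    rw [hp, mul_assoc] at this
    exact Nat.eq_of_mul_eq_mul_left ((by positivity : (0:ℕ) < 2 ^ k)) this
  rcases Nat.eq_zero_or_pos (k' - k) with h0 | h0
  · constructor
    · omega
    · simp [h0] at h2; omega
  · exfalso
    obtain ⟨c, hc⟩ := he
    have h2d : 2 ∣ 2 ^ (k' - k) := dvd_pow_self 2 (by omega)
    obtain ⟨d, hd⟩ := h2d
    have : e + 1 = 2 * (d * (e' + 1)) := by rw [h2, hd]; ring
    omega

lemma uniq {e k e' k' : ℕ} (he : Even e) (he' : Even e')
    (h : 2 ^ k * (e + 1) = 2 ^ k' * (e' + 1)) : k = k' ∧ e = e' := by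
  rcases le_total k k' with hle | hle
  · exact uniq_aux he he' h hle
  · obtain ⟨h1, h2⟩ := uniq_aux he' he h.symm hle
    exact ⟨h1.symm, h2.symm⟩

lemma pow_mul_mem_S {e : ℕ} (he : e ∈ evenNonMersenneSet) (k : ℕ) :
    2 ^ k * (e + 1) - 1 ∈ nonMersenneSet := by
  obtain ⟨⟨h2, hnp⟩, heven⟩ := he
  have h3 : 3 ≤ e + 1 := by omega
  have hk : 1 ≤ 2 ^ k := Nat.one_le_two_pow
  have hge : e + 1 ≤ 2 ^ k * (e + 1) := Nat.le_mul_of_pos_left _ (by omega)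
  constructor
  · omega
  · rintro ⟨j, hj⟩
    have heq : 2 ^ k * (e + 1) = 2 ^ j := by omega
    have hnd : ¬ 2 ∣ (e + 1) := by obtain ⟨c, hc⟩ := heven; omega
    have hcop : Nat.Coprime (e + 1) 2 :=
      ((Nat.prime_two.coprime_iff_not_dvd).mpr hnd).symm
    have hdvd : (e + 1) ∣ 2 ^ j := ⟨2 ^ k, by rw [← heq]; ring⟩
    have := Nat.Coprime.eq_one_of_dvd (hcop.pow_right j) hdvd
    omega

lemma pow_mul_add_one {e k : ℕ} : 2 ^ k * (e + 1) - 1 + 1 = 2 ^ k * (e + 1) := by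
  have hk : 1 ≤ 2 ^ k := Nat.one_le_two_pow
  have : 1 ≤ 2 ^ k * (e + 1) := Nat.one_le_iff_ne_zero.mpr (by positivity)
  omega

-- existence of decomposition
lemma decomp {i : ℕ} (hi : i ∈ nonMersenneSet) :
    ∃ e k : ℕ, e ∈ evenNonMersenneSet ∧ i + 1 = 2 ^ k * (e + 1) := by
  obtain ⟨h2, hnp⟩ := hi
  obtain ⟨K, m, hmul, hodd, hpow⟩ :
      ∃ K m, 2 ^ K * m = i + 1 ∧ ¬ 2 ∣ m ∧ (m = 1 → i + 1 = 2 ^ K) :=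
    ⟨(i + 1).factorization 2, (i + 1) / 2 ^ ((i + 1).factorization 2),
      Nat.ordProj_mul_ordCompl_eq_self (i + 1) 2,
      Nat.not_dvd_ordCompl Nat.prime_two (by omega),
      fun h => by
        conv_lhs => rw [← Nat.ordProj_mul_ordCompl_eq_self (i + 1) 2]
        rw [h, mul_one]⟩
  have hm0 : m ≠ 0 := by intro h; rw [h, mul_zero] at hmul; omega
  have hm1 : m ≠ 1 := fun h => hnp ⟨K, hpow h⟩
  have hm3 : 3 ≤ m := by omega
  refine ⟨m - 1, K, ⟨⟨by omega, ?_⟩, ?_⟩, by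
    rw [Nat.sub_add_cancel (by omega)]; omega⟩
  · rintro ⟨j, hj⟩
    have hmj : m = 2 ^ j := by omega
    rcases Nat.eq_zero_or_pos j with h0 | h0
    · subst h0; simp at hmj; omega
    · exact hodd (hmj ▸ dvd_pow_self 2 (by omega))
  · rcases Nat.even_or_odd m with he | ho
    · exact absurd he.two_dvd hodd
    · obtain ⟨c, hc⟩ := ho; exact ⟨c, by omega⟩

noncomputable def eOf (i : nonMersenneSet) : evenNonMersenneSet :=
  ⟨(decomp i.2).choose, (decomp i.2).choose_spec.choose_spec.1⟩

noncomputable def kOf (i : nonMersenneSet) : ℕ := (decomp i.2).choose_spec.choose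

lemma eOf_spec (i : nonMersenneSet) :
    (i : ℕ) + 1 = 2 ^ kOf i * ((eOf i : ℕ) + 1) :=
  (decomp i.2).choose_spec.choose_spec.2

noncomputable def phi : MvPolynomial nonMersenneSet (ZMod 2) →ₐ[ZMod 2]
    MvPolynomial evenNonMersenneSet (ZMod 2) :=
  aeval (fun i => X (eOf i) ^ 2 ^ kOf i)

lemma phi_X (i : nonMersenneSet) : phi (X i) = X (eOf i) ^ 2 ^ kOf i := by
  simp [phi]

lemma phi_vanish : ∀ p ∈ dyerLashofIdeal, phi p = 0 := by
  intro p hp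
  have hle : dyerLashofIdeal ≤ RingHom.ker phi.toRingHom := by
    rw [dyerLashofIdeal, Ideal.span_le]
    rintro q ⟨i, j, hij, rfl⟩
    simp only [SetLike.mem_coe, RingHom.mem_ker, AlgHom.toRingHom_eq_coe,
      RingHom.coe_coe]
    have hj : (j : ℕ) + 1 = 2 ^ (kOf i + 1) * ((eOf i : ℕ) + 1) := by
      have h1 := eOf_spec i
      rw [pow_succ]
      have : 2 ^ kOf i * 2 * ((eOf i : ℕ) + 1) = 2 * (2 ^ kOf i * ((eOf i : ℕ) + 1)) := by ring
      omega
    have hsp := eOf_spec j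
    rw [hj] at hsp
    obtain ⟨hk, he⟩ := uniq (eOf i).2.2 (eOf j).2.2 hsp
    have heq : eOf j = eOf i := Subtype.ext he.symm
    have hk' : kOf j = kOf i + 1 := hk.symm
    rw [map_sub, map_pow, phi_X, phi_X, heq, hk', ← pow_mul, pow_succ, sub_self]
  exact hle hp

lemma twoi_mem_S (i : nonMersenneSet) : 2 * (i : ℕ) + 1 ∈ nonMersenneSet := by
  obtain ⟨h2, hnp⟩ := i.2
  refine ⟨by omega, ?_⟩
  rintro ⟨j, hj⟩
  have hj1 : 1 ≤ j := by
    rcases Nat.eq_zero_or_pos j with h0 | h0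
    · subst h0; omega
    · omega
  exact hnp ⟨j - 1, by
    have : (2:ℕ) ^ j = 2 * 2 ^ (j-1) := by
      rw [← pow_succ']; congr 1; omega
    omega⟩

lemma mk_sq (i j : nonMersenneSet) (h : (j : ℕ) = 2 * (i : ℕ) + 1) :
    Ideal.Quotient.mk dyerLashofIdeal (X i) ^ 2 =
      Ideal.Quotient.mk dyerLashofIdeal (X j) := by
  rw [← map_pow, Ideal.Quotient.eq]
  exact Ideal.subset_span ⟨i, j, h, rfl⟩

lemma mk_pow (e : evenNonMersenneSet) : ∀ (k : ℕ) (i : nonMersenneSet),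
    (i : ℕ) + 1 = 2 ^ k * ((e : ℕ) + 1) →
    Ideal.Quotient.mk dyerLashofIdeal (X ⟨(e : ℕ), e.2.1⟩) ^ 2 ^ k =
      Ideal.Quotient.mk dyerLashofIdeal (X i) := by
  intro k
  induction k with
  | zero =>
    intro i hi
    have hie : (i : ℕ) = (e : ℕ) := by simp at hi; omega
    have : i = ⟨(e : ℕ), e.2.1⟩ := Subtype.ext hie
    rw [this]; simp
  | succ k ih =>
    intro i hi
    set i' : nonMersenneSet := ⟨2 ^ k * ((e : ℕ) + 1) - 1, pow_mul_mem_S e.2 k⟩ with hi'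
    have hi'1 : (i' : ℕ) + 1 = 2 ^ k * ((e : ℕ) + 1) := pow_mul_add_one
    have hii' : (i : ℕ) = 2 * (i' : ℕ) + 1 := by
      have : (i : ℕ) + 1 = 2 * ((i' : ℕ) + 1) := by rw [hi'1, hi, pow_succ]; ring
      omega
    rw [pow_succ, pow_mul, ih i' hi'1, mk_sq i' i hii']

noncomputable def psi : MvPolynomial evenNonMersenneSet (ZMod 2) →ₐ[ZMod 2]
    (MvPolynomial nonMersenneSet (ZMod 2) ⧸ dyerLashofIdeal) :=
  aeval (fun e => Ideal.Quotient.mk dyerLashofIdeal (X ⟨(e : ℕ), e.2.1⟩))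

noncomputable def phibar : (MvPolynomial nonMersenneSet (ZMod 2) ⧸ dyerLashofIdeal)
    →ₐ[ZMod 2] MvPolynomial evenNonMersenneSet (ZMod 2) :=
  Ideal.Quotient.liftₐ dyerLashofIdeal phi phi_vanish

lemma phibar_mk (p : MvPolynomial nonMersenneSet (ZMod 2)) :
    phibar (Ideal.Quotient.mk dyerLashofIdeal p) = phi p := by
  simp [phibar]
  rfl

lemma eOf_even (i : nonMersenneSet) : Even ((eOf i : ℕ)) := (eOf i).2.2

lemma key (e : evenNonMersenneSet) (k : ℕ) (i : nonMersenneSet)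
    (h : (i : ℕ) + 1 = 2 ^ k * ((e : ℕ) + 1)) : eOf i = e ∧ kOf i = k := by
  have hsp := eOf_spec i
  rw [h] at hsp
  obtain ⟨hk, he⟩ := uniq e.2.2 (eOf_even i) hsp
  exact ⟨Subtype.ext he.symm, hk.symm⟩

/-- The quotient of `F₂[yᵢ : i ∈ S]`, where `S = {i ≥ 2 : i + 1 not a power of 2}`,
by the ideal generated by the `yᵢ² - y_{2i+1}` is isomorphic as an `F₂`-algebra to
the polynomial algebra `F₂[y_e : e ∈ S, e even]` on the even-indexed variables, via
the map sending the class of `y_{2^k (e+1) - 1}` to `y_e^(2^k)`.  In particular,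
assigning `yᵢ` degree `i + 1`, the quotient is a polynomial algebra all of whose
generators lie in odd degrees `e + 1`. -/
theorem quotient_is_polynomial_on_even_generators :
    ∃ eqv : (MvPolynomial nonMersenneSet (ZMod 2) ⧸ dyerLashofIdeal)
        ≃ₐ[ZMod 2] MvPolynomial evenNonMersenneSet (ZMod 2),
      (∀ (e : evenNonMersenneSet) (k : ℕ) (i : nonMersenneSet),
        (i : ℕ) = 2 ^ k * ((e : ℕ) + 1) - 1 →
          eqv (Ideal.Quotient.mk dyerLashofIdeal (X i)) = X e ^ (2 ^ k)) ∧
      (∀ e : evenNonMersenneSet, Odd ((e : ℕ) + 1)) := by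
  have h1 : phibar.comp psi = AlgHom.id (ZMod 2) _ := by
    apply MvPolynomial.algHom_ext
    intro e
    have he : ((⟨(e : ℕ), e.2.1⟩ : nonMersenneSet) : ℕ) + 1 = 2 ^ 0 * ((e : ℕ) + 1) := by simp
    obtain ⟨heOf, hkOf⟩ := key e 0 _ he
    simp only [AlgHom.coe_comp, Function.comp_apply, AlgHom.id_apply, psi, aeval_X]
    rw [phibar_mk, phi_X, heOf, hkOf]
    simp
  have h2 : psi.comp phibar = AlgHom.id (ZMod 2) _ := by
    apply Ideal.Quotient.algHom_ext
    apply MvPolynomial.algHom_ext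
    intro i
    simp only [AlgHom.coe_comp, Function.comp_apply, Ideal.Quotient.mkₐ_eq_mk, AlgHom.id_apply]
    rw [phibar_mk, phi_X, map_pow]
    have : psi (X (eOf i)) = Ideal.Quotient.mk dyerLashofIdeal (X ⟨((eOf i) : ℕ), (eOf i).2.1⟩) := by
      simp [psi]
    rw [this, mk_pow (eOf i) (kOf i) i (eOf_spec i)]
  refine ⟨AlgEquiv.ofAlgHom phibar psi h1 h2, ?_, ?_⟩
  · intro e k i hi
    have h : (i : ℕ) + 1 = 2 ^ k * ((e : ℕ) + 1) := by rw [hi]; exact pow_mul_add_one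
    obtain ⟨heOf, hkOf⟩ := key e k i h
    change phibar (Ideal.Quotient.mk dyerLashofIdeal (X i)) = X e ^ 2 ^ k
    rw [phibar_mk, phi_X, heOf, hkOf]
  · intro e
    obtain ⟨c, hc⟩ := e.2.2
    exact ⟨c, by omega⟩
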